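/- Let B = (O, Ω, R, Ω∖T, T) be a bud generating system with initial colors I = Ω∖T, and let O_{Ω,B} be the colored operad of elements derivable in B from colored units with output and input colors in Ω∖T. Then the language L(B) = { x = (c,T,c̄) ∈ B_Ω(O) : 1_c →_B x, c ∈ Ω∖T, all entries of c̄ in T } is an algebra over the colored operad O_{Ω,B}: inserting elements of L(B) (graded by their output colors) at the inputs of an operation of O_{Ω,B} with matching colors yields again an element of L(B). -/

import Mathlib

/-- An operad in the category of sets, presented via insertion operations `∘ᵢ`,
with a unit and the standard associativity/commutation axioms. -/
structure Operad where
  Ops : Type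
  arity : Ops → ℕ
  unit : Ops
  arity_unit : arity unit = 1
  ins : Ops → ℕ → Ops → Ops
  arity_ins : ∀ x i y, i < arity x → arity (ins x i y) = arity x + arity y - 1
  unit_ins : ∀ x, ins unit 0 x = x
  ins_unit : ∀ x i, i < arity x → ins x i unit = x
  ins_assoc : ∀ x y z i j, j ≤ i → i < j + arity y →
    ins (ins x j y) i z = ins x j (ins y (i - j) z)
  ins_comm : ∀ x y z i j, i < j → j < arity x →
    ins (ins x j y) i z = ins (ins x i z) (j + arity z - 1) y

/-- An element `(c, T, c̄)` of the bud operad `B_Ω(O)`: an operation `T` of `O`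
together with an output color `c` and a list `c̄` of input colors. -/
structure BudElem (O : Operad) (Ω : Type) where
  out : Ω
  op : O.Ops
  ins : List Ω
  len_eq : ins.length = O.arity op

/-- The colored unit `1_c = (c, 1, c)` of the bud operad. -/
def budUnit (O : Operad) (Ω : Type) (c : Ω) : BudElem O Ω :=
  ⟨c, O.unit, [c], by simp [O.arity_unit]⟩

/-- Colored insertion in the bud operad: `(c,T,c̄) ∘ᵢ (c',T',c̄')` is defined
exactly when `c̄ᵢ = c'`. -/
def budInsert {O : Operad} {Ω : Type} [DecidableEq Ω] (x : BudElem O Ω) (i : ℕ)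
    (r : BudElem O Ω) : Option (BudElem O Ω) :=
  if h : i < O.arity x.op ∧ x.ins[i]? = some r.out then
    some { out := x.out
           op := O.ins x.op i r.op
           ins := x.ins.take i ++ r.ins ++ x.ins.drop (i + 1)
           len_eq := by
             have e1 := x.len_eq
             have e2 := r.len_eq
             have e3 := O.arity_ins x.op i r.op h.1
             simp only [List.length_append, List.length_take, List.length_drop, e3]
             omega }
  else none

/-- Derivability `y →_B x` in a bud generating system with rule set `R`:
`x` is obtained from `y` by a finite sequence of insertions of rules of `R`. -/
inductive BudDerives {O : Operad} {Ω : Type} [DecidableEq Ω] (R : Set (BudElem O Ω)) :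
    BudElem O Ω → BudElem O Ω → Prop where
  | refl (x : BudElem O Ω) : BudDerives R x x
  | step {x y z : BudElem O Ω} (i : ℕ) (r : BudElem O Ω) :
      BudDerives R x y → r ∈ R → budInsert y i r = some z → BudDerives R x z

/-- The colored operad `O_{Ω,B}` determined by a bud generating system with
initial colors `I = Ω ∖ T`: elements derivable from a colored unit, with output
and input colors all nonterminal. -/
def OpsB {O : Operad} {Ω : Type} [DecidableEq Ω] (R : Set (BudElem O Ω)) (Term : Set Ω) :
    Set (BudElem O Ω) :=
  { x | BudDerives R (budUnit O Ω x.out) x ∧ x.out ∉ Term ∧ ∀ c ∈ x.ins, c ∉ Term }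

/-- The language `L(B)`: elements derivable from a colored unit `1_c`, `c ∈ I = Ω ∖ T`,
with all input colors terminal. -/
def BudLang {O : Operad} {Ω : Type} [DecidableEq Ω] (R : Set (BudElem O Ω)) (Term : Set Ω) :
    Set (BudElem O Ω) :=
  { x | BudDerives R (budUnit O Ω x.out) x ∧ x.out ∉ Term ∧ ∀ c ∈ x.ins, c ∈ Term }

/-- Full operadic composition `γ(x; a₁, …, aₙ)` in the bud operad, performed as the
sequence of insertions `(⋯(x ∘ₙ aₙ) ∘_{n-1} a_{n-1} ⋯ ) ∘₁ a₁`. -/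
def budComp {O : Operad} {Ω : Type} [DecidableEq Ω] (x : BudElem O Ω)
    (as : List (BudElem O Ω)) : Option (BudElem O Ω) :=
  (as.zipIdx.map Prod.swap).reverse.foldlM (fun acc p => budInsert acc p.1 p.2) x

/-- The projection `℘_in(c,T,c̄) = (T,c̄)` forgetting the output color. -/
def pIn {O : Operad} {Ω : Type} (x : BudElem O Ω) : O.Ops × List Ω := (x.op, x.ins)

/-- Application of an (uncolored) operation `S` of `O` to a list of pairs
`(Tⱼ, c̄ⱼ)`: operadic composition of the operations together with concatenation
of the color lists. -/
def opComp (O : Operad) {Ω : Type} (S : O.Ops) (as : List (O.Ops × List Ω)) :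
    O.Ops × List Ω :=
  (((as.map Prod.fst).zipIdx.map Prod.swap).reverse.foldl (fun acc p => O.ins acc p.1 p.2) S,
   (as.map Prod.snd).flatten)

section Aux

set_option linter.unusedSectionVars false

theorem take3 {α : Type} (l1 l2 l3 : List α) (j : ℕ) (hj : j ≤ l2.length) :
    (l1 ++ l2 ++ l3).take (l1.length + j) = l1 ++ l2.take j := by
  rw [List.append_assoc]
  simp [List.take_append, List.take_append_of_le_length hj]

theorem drop3 {α : Type} (l1 l2 l3 : List α) (j : ℕ) (hj : j ≤ l2.length) :
    (l1 ++ l2 ++ l3).drop (l1.length + j) = l2.drop j ++ l3 := by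
  rw [List.append_assoc]
  simp [List.drop_append, List.drop_append_of_le_length hj]

theorem get3 {α : Type} (l1 l2 l3 : List α) (j : ℕ) (hj : j < l2.length) :
    (l1 ++ l2 ++ l3)[l1.length + j]? = l2[j]? := by
  rw [List.append_assoc]
  simp [List.getElem?_append_right, List.getElem?_append_left hj]

variable {O : Operad} {Ω : Type} [DecidableEq Ω]

theorem BudElem.ext' {x y : BudElem O Ω} (h1 : x.out = y.out) (h2 : x.op = y.op)
    (h3 : x.ins = y.ins) : x = y := by
  cases x; cases y; simp_all

theorem budInsert_eq_some {x r z : BudElem O Ω} {i : ℕ} (h : budInsert x i r = some z) :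
    i < O.arity x.op ∧ x.ins[i]? = some r.out ∧ z.out = x.out ∧
    z.op = O.ins x.op i r.op ∧ z.ins = x.ins.take i ++ r.ins ++ x.ins.drop (i + 1) := by
  unfold budInsert at h
  by_cases hh : i < O.arity x.op ∧ x.ins[i]? = some r.out
  · rw [dif_pos hh] at h
    have hz := (Option.some.injEq _ _).mp h
    refine ⟨hh.1, hh.2, ?_, ?_, ?_⟩ <;> rw [← hz]
  · rw [dif_neg hh] at h; cases h

theorem budInsert_defined {x r : BudElem O Ω} {i : ℕ}
    (h1 : i < O.arity x.op) (h2 : x.ins[i]? = some r.out) :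
    ∃ w, budInsert x i r = some w ∧ w.out = x.out ∧ w.op = O.ins x.op i r.op ∧
      w.ins = x.ins.take i ++ r.ins ++ x.ins.drop (i + 1) := by
  cases hcase : budInsert x i r with
  | none =>
    unfold budInsert at hcase
    rw [dif_pos ⟨h1, h2⟩] at hcase
    cases hcase
  | some w =>
    obtain ⟨_, _, h3, h4, h5⟩ := budInsert_eq_some hcase
    exact ⟨w, rfl, h3, h4, h5⟩

theorem budInsert_unit {x : BudElem O Ω} {i : ℕ} {c : Ω} (h : x.ins[i]? = some c) :
    budInsert x i (budUnit O Ω c) = some x := by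
  have hlen := x.len_eq
  have hi : i < x.ins.length := (List.getElem?_eq_some_iff.mp h).1
  have h1 : i < O.arity x.op := hlen ▸ hi
  obtain ⟨w, hw, hwout, hwop, hwins⟩ :=
    budInsert_defined (r := budUnit O Ω c) h1 (by simpa [budUnit] using h)
  rw [hw]
  congr 1
  refine BudElem.ext' hwout ?_ ?_
  · rw [hwop]; exact O.ins_unit x.op i h1
  · rw [hwins]
    show x.ins.take i ++ [c] ++ x.ins.drop (i + 1) = x.ins
    have hc : x.ins[i] = c := (List.getElem?_eq_some_iff.mp h).2
    rw [List.append_assoc, List.singleton_append, ← hc,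
      ← List.drop_eq_getElem_cons hi, List.take_append_drop]

/-- Associativity of bud insertion, option-level. -/
theorem budInsert_assoc {x y r a z : BudElem O Ω} {i j : ℕ}
    (h1 : budInsert y j r = some a) (h2 : budInsert x i a = some z) :
    ∃ w, budInsert x i y = some w ∧ budInsert w (i + j) r = some z := by
  obtain ⟨hj, hjo, haout, haop, hains⟩ := budInsert_eq_some h1
  obtain ⟨hi, hio, hzout, hzop, hzins⟩ := budInsert_eq_some h2
  have hxlen := x.len_eq; have hylen := y.len_eq; have hrlen := r.len_eq
  rw [haout] at hio
  obtain ⟨w, hw, hwout, hwop, hwins⟩ := budInsert_defined hi hio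
  refine ⟨w, hw, ?_⟩
  have hjlt : j < y.ins.length := hylen ▸ hj
  have hilt : i < x.ins.length := hxlen ▸ hi
  have htklen : (x.ins.take i).length = i := by
    rw [List.length_take]; omega
  have hwj : w.ins[i + j]? = some r.out := by
    have := get3 (x.ins.take i) y.ins (x.ins.drop (i + 1)) j hjlt
    rw [htklen, ← hwins] at this
    rw [this]
    exact hjo
  have harw : O.arity w.op = O.arity x.op + O.arity y.op - 1 := by
    rw [hwop]; exact O.arity_ins x.op i y.op hi
  have hij : i + j < O.arity w.op := by omega
  obtain ⟨v, hv, hvout, hvop, hvins⟩ := budInsert_defined hij hwj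
  rw [hv]
  congr 1
  refine BudElem.ext' (by rw [hvout, hwout, hzout]) ?_ ?_
  · rw [hvop, hwop, hzop, haop]
    have := O.ins_assoc x.op y.op r.op (i + j) i (by omega) (by omega)
    rw [this]
    congr 2
    omega
  · rw [hvins, hzins, hains]
    have ht : w.ins.take (i + j) = x.ins.take i ++ y.ins.take j := by
      have := take3 (x.ins.take i) y.ins (x.ins.drop (i + 1)) j (by omega)
      rw [htklen, ← hwins] at this
      exact this
    have hd : w.ins.drop (i + j + 1) = y.ins.drop (j + 1) ++ x.ins.drop (i + 1) := by
      have := drop3 (x.ins.take i) y.ins (x.ins.drop (i + 1)) (j + 1) (by omega)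
      rw [htklen, ← hwins, show i + (j + 1) = i + j + 1 by omega] at this
      exact this
    rw [ht, hd]
    simp [List.append_assoc]

variable {R : Set (BudElem O Ω)}

/-- Inserting a derivable element preserves derivability. -/
theorem budDerives_insert {u x a z : BudElem O Ω} {c : Ω} {i : ℕ}
    (hu : BudDerives R u x) (ha : BudDerives R (budUnit O Ω c) a)
    (hz : budInsert x i a = some z) : BudDerives R u z := by
  induction ha generalizing x z i with
  | refl =>
    obtain ⟨h1, h2, _⟩ := budInsert_eq_some hz
    have h' := budInsert_unit (c := c) (x := x) (i := i) (by simpa [budUnit] using h2)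
    rw [hz] at h'
    rw [Option.some_inj.mp h']
    exact hu
  | step j r _ hr hins ih =>
    obtain ⟨w, hw1, hw2⟩ := budInsert_assoc hins hz
    exact BudDerives.step (i + j) r (ih hu hw1) hr hw2

/-- Key composition lemma, by reverse induction on the list. -/
theorem budComp_spec (as : List (BudElem O Ω)) :
    ∀ (x : BudElem O Ω) (suffix : List Ω),
    x.ins = as.map BudElem.out ++ suffix →
    ∃ z, budComp x as = some z ∧ z.out = x.out ∧
      z.ins = (as.map BudElem.ins).flatten ++ suffix ∧
      ∀ u, BudDerives R u x → (∀ a ∈ as, BudDerives R (budUnit O Ω a.out) a) →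
        BudDerives R u z := by
  induction as using List.reverseRecOn with
  | nil =>
    intro x suffix hx
    exact ⟨x, by simp [budComp], rfl, by simpa using hx, fun u hu _ => hu⟩
  | append_singleton as' a ih =>
    intro x suffix hx
    have hn : (as'.map BudElem.out).length = as'.length := by simp
    have hx' : x.ins = as'.map BudElem.out ++ [a.out] ++ suffix := by
      rw [hx]; simp
    have hxa : x.ins[as'.length]? = some a.out := by
      have h0 := get3 (as'.map BudElem.out) [a.out] suffix 0 (by simp)
      rw [Nat.add_zero, hn] at h0
      rw [hx', h0]
      simp
    have hilt : as'.length < O.arity x.op := by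
      have h := x.len_eq
      rw [hx'] at h
      simp only [List.length_append, List.length_map, List.length_singleton] at h
      omega
    obtain ⟨w, hw, hwout, hwop, hwins'⟩ := budInsert_defined hilt hxa
    have htk : x.ins.take as'.length = as'.map BudElem.out := by
      have := take3 (as'.map BudElem.out) [a.out] suffix 0 (by simp)
      rw [hn, ← hx'] at this
      simpa using this
    have hdr : x.ins.drop (as'.length + 1) = suffix := by
      have := drop3 (as'.map BudElem.out) [a.out] suffix 1 (by simp)
      rw [hn, ← hx'] at this
      simpa using this
    have hwins : w.ins = as'.map BudElem.out ++ (a.ins ++ suffix) := by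
      rw [hwins', htk, hdr, List.append_assoc]
    obtain ⟨z, hz1, hz2, hz3, hz4⟩ := ih w (a.ins ++ suffix) hwins
    refine ⟨z, ?_, ?_, ?_, ?_⟩
    · unfold budComp
      rw [List.zipIdx_append, List.map_append, List.reverse_append, List.foldlM_append]
      simp only [List.zipIdx_singleton, List.map_cons, List.map_nil, Prod.swap, zero_add,
        List.reverse_singleton, List.foldlM_cons,
        List.foldlM_nil, hw, Option.pure_def, Option.bind_eq_bind, Option.bind_some]
      exact hz1
    · rw [hz2, hwout]
    · rw [hz3]; simp
    · intro u hu hall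
      exact hz4 u (budDerives_insert hu (hall a (by simp)) hw)
        (fun b hb => hall b (by simp [hb]))

theorem forall₂_out {as : List (BudElem O Ω)} {l : List Ω}
    (h : List.Forall₂ (fun (a : BudElem O Ω) (c : Ω) => a.out = c) as l) :
    l = as.map BudElem.out := by
  induction h with
  | nil => rfl
  | cons h _ ih => simp_all

end Aux

/-- For a bud generating system `B = (O, Ω, R, Ω∖T, T)` with initial
colors `I = Ω∖T`, the language `L(B)` is an algebra over the colored operad
`O_{Ω,B}`: inserting elements of `L(B)` (graded by their output colors) at the
inputs of an operation of `O_{Ω,B}` with matching colors yields again an element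
of `L(B)`. -/
theorem statement1 (O : Operad) (Ω : Type) [Finite Ω] [DecidableEq Ω]
    (R : Set (BudElem O Ω)) (hR : R.Finite) (Term : Set Ω) :
    ∀ x ∈ OpsB R Term, ∀ as : List (BudElem O Ω),
      List.Forall₂ (fun (a : BudElem O Ω) (c : Ω) => a.out = c) as x.ins →
      (∀ a ∈ as, a ∈ BudLang R Term) →
      ∃ z : BudElem O Ω, budComp x as = some z ∧ z ∈ BudLang R Term := by
  intro x hx as hmatch hlang
  obtain ⟨hder, hout, hins⟩ := hx
  have hxins : x.ins = as.map BudElem.out ++ [] := by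
    simpa using (forall₂_out hmatch)
  obtain ⟨z, hz1, hz2, hz3, hz4⟩ := budComp_spec (R := R) as x [] hxins
  refine ⟨z, hz1, ?_, ?_, ?_⟩
  · rw [hz2]
    exact hz4 (budUnit O Ω x.out) hder (fun a ha => (hlang a ha).1)
  · rw [hz2]; exact hout
  · intro c hc
    rw [hz3] at hc
    simp only [List.append_nil, List.mem_flatten, List.mem_map] at hc
    obtain ⟨l, ⟨a, ha, rfl⟩, hcl⟩ := hc
    exact (hlang a ha).2.2 c hcl
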